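/- arXiv:1902.04467 — 2 statements merged into one kernel-verified Lean document; each statement's English description precedes it below -/
import Mathlib

section
/- There exist a finite-rank operator K₁ on ℓ²(ℕ, 1), mapping finitely supported functions to finitely supported functions, and a constant c ≥ 0, such that for every finitely supported f : ℕ → ℂ: Δ_ℕ(i A_ℕ f) − i A_ℕ(Δ_ℕ f) = (1/2)·Δ_ℕ((4 − Δ_ℕ) f) + K₁ f, and moreover |⟨A_ℕ f, Δ_ℕ f⟩ − ⟨Δ_ℕ f, A_ℕ f⟩| ≤ c·‖f‖², the inner product and norm being those of ℓ²(ℕ, 1). -/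
noncomputable section

open Complex

/-- `(Δ_ℕ f)(n) = 2f(n) − f(n−1) − f(n+1)` for `n ≥ 1`, `(Δ_ℕ f)(0) = f(0) − f(1)`. -/
def deltaN (f : ℕ → ℂ) : ℕ → ℂ := fun n =>
  if n = 0 then f 0 - f 1 else 2 * f n - f (n - 1) - f (n + 1)

/-- `(A_ℕ f)(n) = (i/2)·((n − 1/2)·f(n−1) − (n + 1/2)·f(n+1))`, with `f(−1) = 0`. -/
def aN (f : ℕ → ℂ) : ℕ → ℂ := fun n =>
  (I / 2) * (((n : ℂ) - 1 / 2) * (if n = 0 then 0 else f (n - 1))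
    - ((n : ℂ) + 1 / 2) * f (n + 1))

/-- The inner product of `ℓ²(ℕ, 1)`: `⟨f,g⟩ = ∑ conj (f n) · g n`. -/
def ipN (f g : ℕ → ℂ) : ℂ := ∑' n : ℕ, (starRingEnd ℂ) (f n) * g n

namespace Stmt2Aux

/-- Finite support from an eventual-zero bound. -/
lemma finOfBound {α : Type*} [Zero α] {F : ℕ → α} (N : ℕ) (h : ∀ n, N ≤ n → F n = 0) :
    (Function.support F).Finite := by
  apply Set.Finite.subset (Set.finite_Iio N)
  intro n hn
  simp only [Set.mem_Iio]
  by_contra hc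
  exact hn (h n (by omega))

/-- Eventual-zero bound from finite support. -/
lemma finBound {f : ℕ → ℂ} (hf : (Function.support f).Finite) :
    ∃ N, ∀ n, N ≤ n → f n = 0 := by
  refine ⟨hf.toFinset.sup id + 1, fun n hn => ?_⟩
  by_contra hc
  have : n ∈ hf.toFinset := by simpa using hc
  have := Finset.le_sup (f := id) this
  simp only [id] at this
  omega

lemma tsum_telescope {w : ℕ → ℂ} (hw : (Function.support w).Finite) :
    ∑' n, (w n - (if n = 0 then (0:ℂ) else w (n-1))) = 0 := by
  set v : ℕ → ℂ := fun n => if n = 0 then (0:ℂ) else w (n-1) with hv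
  obtain ⟨N, hN⟩ := finBound hw
  have hvfin : (Function.support v).Finite := by
    apply finOfBound (N + 1)
    intro n hn
    simp only [hv]
    rw [if_neg (by omega)]
    exact hN _ (by omega)
  have hsw : Summable w := summable_of_finite_support hw
  have hsv : Summable v := summable_of_finite_support hvfin
  rw [Summable.tsum_sub hsw hsv, Summable.tsum_eq_zero_add hsv]
  have h0 : v 0 = 0 := by simp [hv]
  have h1 : ∀ n, v (n + 1) = w n := by intro n; simp [hv]
  simp only [h0, h1, zero_add, sub_self]

/-- Symmetry of `Δ_ℕ` on finitely supported functions. -/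
lemma delta_symm {f h : ℕ → ℂ} (hf : (Function.support f).Finite)
    (hh : (Function.support h).Finite) : ipN (deltaN f) h = ipN f (deltaN h) := by
  set w : ℕ → ℂ := fun n =>
    (starRingEnd ℂ) (f n) * h (n+1) - (starRingEnd ℂ) (f (n+1)) * h n with hwdef
  have key : ∀ n, (starRingEnd ℂ) (deltaN f n) * h n - (starRingEnd ℂ) (f n) * deltaN h n
      = w n - (if n = 0 then 0 else w (n-1)) := by
    intro n
    cases n with
    | zero =>
        show (starRingEnd ℂ) (f 0 - f 1) * h 0 - (starRingEnd ℂ) (f 0) * (h 0 - h 1)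
            = ((starRingEnd ℂ) (f 0) * h 1 - (starRingEnd ℂ) (f 1) * h 0) - 0
        simp only [map_sub]
        ring
    | succ m =>
        have e1 : m + 1 - 1 = m := rfl
        simp only [deltaN, hwdef, if_neg (Nat.succ_ne_zero m), e1, map_sub, map_mul,
          map_ofNat]
        ring
  obtain ⟨Nf, hNf⟩ := finBound hf
  obtain ⟨Nh, hNh⟩ := finBound hh
  have hwfin : (Function.support w).Finite := by
    apply finOfBound (Nf + Nh + 1)
    intro n hn
    simp only [hwdef, hNf n (by omega), hNf (n+1) (by omega), map_zero, zero_mul,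
      sub_zero, mul_zero, sub_self]
  have s1 : Summable (fun n => (starRingEnd ℂ) (deltaN f n) * h n) := by
    apply summable_of_finite_support
    apply Set.Finite.subset hh
    intro n hn
    simp only [Function.mem_support] at hn ⊢
    intro h0; exact hn (by rw [h0, mul_zero])
  have s2 : Summable (fun n => (starRingEnd ℂ) (f n) * deltaN h n) := by
    apply summable_of_finite_support
    apply Set.Finite.subset hf
    intro n hn
    simp only [Function.mem_support] at hn ⊢
    intro h0; exact hn (by rw [h0, map_zero, zero_mul])
  have := tsum_telescope hwfin
  rw [← sub_eq_zero]
  rw [ipN, ipN, ← Summable.tsum_sub s1 s2]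
  rw [← this]
  exact tsum_congr key

/-- Symmetry of `A_ℕ` on finitely supported functions. -/
lemma aN_symm {f h : ℕ → ℂ} (hf : (Function.support f).Finite)
    (hh : (Function.support h).Finite) : ipN (aN f) h = ipN f (aN h) := by
  set w : ℕ → ℂ := fun n =>
    (I/2) * ((n:ℂ) + 1/2) * ((starRingEnd ℂ) (f (n+1)) * h n + (starRingEnd ℂ) (f n) * h (n+1))
    with hwdef
  have key : ∀ n, (starRingEnd ℂ) (aN f n) * h n - (starRingEnd ℂ) (f n) * aN h n
      = w n - (if n = 0 then 0 else w (n-1)) := by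
    intro n
    cases n with
    | zero =>
        show (starRingEnd ℂ) ((I/2) * ((((0:ℕ):ℂ) - 1/2) * 0 - (((0:ℕ):ℂ) + 1/2) * f (0+1))) * h 0
            - (starRingEnd ℂ) (f 0) * ((I/2) * ((((0:ℕ):ℂ) - 1/2) * 0 - (((0:ℕ):ℂ) + 1/2) * h (0+1)))
            = (I/2) * (((0:ℕ):ℂ) + 1/2) * ((starRingEnd ℂ) (f (0+1)) * h 0
                + (starRingEnd ℂ) (f 0) * h (0+1)) - 0
        simp only [map_mul, map_sub, map_add, map_div₀, conj_I, map_one, map_ofNat,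
          Nat.cast_zero, map_zero, mul_zero, zero_mul]
        ring
    | succ m =>
        have e1 : m + 1 - 1 = m := rfl
        simp only [aN, hwdef, if_neg (Nat.succ_ne_zero m), e1, map_mul, map_sub, map_div₀,
          conj_I, map_one, map_ofNat, map_natCast, map_add]
        push_cast
        ring
  obtain ⟨Nf, hNf⟩ := finBound hf
  obtain ⟨Nh, hNh⟩ := finBound hh
  have hwfin : (Function.support w).Finite := by
    apply finOfBound (Nf + Nh + 1)
    intro n hn
    simp only [hwdef, hNf n (by omega), hNf (n+1) (by omega), map_zero, zero_mul,
      mul_zero, add_zero, zero_add]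
  have s1 : Summable (fun n => (starRingEnd ℂ) (aN f n) * h n) := by
    apply summable_of_finite_support
    apply Set.Finite.subset hh
    intro n hn
    simp only [Function.mem_support] at hn ⊢
    intro h0; exact hn (by rw [h0, mul_zero])
  have s2 : Summable (fun n => (starRingEnd ℂ) (f n) * aN h n) := by
    apply summable_of_finite_support
    apply Set.Finite.subset hf
    intro n hn
    simp only [Function.mem_support] at hn ⊢
    intro h0; exact hn (by rw [h0, map_zero, zero_mul])
  have := tsum_telescope hwfin
  rw [← sub_eq_zero]
  rw [ipN, ipN, ← Summable.tsum_sub s1 s2]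
  rw [← this]
  exact tsum_congr key

/-- The banded operator `i⁻¹·(Δ(iA) − iAΔ)`. -/
def Gban (f : ℕ → ℂ) : ℕ → ℂ := fun n =>
  if n = 0 then (1/2)*f 0 - (1/4)*f 1 - (1/2)*f 2
  else if n = 1 then -(1/4)*f 0 + f 1 - (1/2)*f 3
  else f n - (1/2)*f (n-2) - (1/2)*f (n+2)

lemma comm_eq (f : ℕ → ℂ) (n : ℕ) :
    aN (deltaN f) n - deltaN (aN f) n = I * Gban f n := by
  match n with
  | 0 =>
      simp only [aN, deltaN, Gban, if_pos rfl, if_neg (Nat.one_ne_zero)]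
      norm_num
      ring
  | 1 =>
      have e1 : (1:ℕ) - 1 = 0 := rfl
      have e2 : (2:ℕ) - 1 = 1 := rfl
      simp only [aN, deltaN, Gban, if_neg (Nat.one_ne_zero), e1, e2, if_pos rfl,
        if_neg (by norm_num : (2:ℕ) ≠ 0)]
      norm_num
      ring
  | (m+2) =>
      have e1 : m + 2 - 1 = m + 1 := rfl
      have e2 : m + 2 - 2 = m := rfl
      have e3 : m + 1 - 1 = m := rfl
      have e4 : m + 3 - 1 = m + 2 := rfl
      have e5 : m + 2 + 1 = m + 3 := rfl
      simp only [aN, deltaN, Gban, e1, e2, e3, e4, e5,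
        if_neg (Nat.succ_ne_zero (m+1)), if_neg (Nat.succ_ne_zero m),
        if_neg (Nat.succ_ne_zero (m+2)),
        if_neg (by omega : ¬ (m + 2 = 1))]
      push_cast
      ring

def K1fun (f : ℕ → ℂ) : ℕ → ℂ := fun n =>
  if n = 0 then -(1/2)*f 0 + (1/4)*f 1 else if n = 1 then (1/4)*f 0 else 0

def K1 : (ℕ → ℂ) →ₗ[ℂ] (ℕ → ℂ) where
  toFun := K1fun
  map_add' f g := by
    funext n; simp only [K1fun, Pi.add_apply]; split_ifs <;> ring
  map_smul' c f := by
    funext n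
    simp only [K1fun, Pi.smul_apply, RingHom.id_apply, smul_eq_mul]
    split_ifs <;> ring

lemma Gban_eq (f : ℕ → ℂ) (n : ℕ) :
    Gban f n = (1/2) * deltaN (fun k => 4 * f k - deltaN f k) n + K1fun f n := by
  match n with
  | 0 =>
      simp only [Gban, deltaN, K1fun, if_pos rfl, if_neg (Nat.one_ne_zero)]
      norm_num
      ring
  | 1 =>
      have e1 : (1:ℕ) - 1 = 0 := rfl
      have e2 : (2:ℕ) - 1 = 1 := rfl
      simp only [Gban, deltaN, K1fun, if_neg (Nat.one_ne_zero), e1, e2, if_pos rfl,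
        if_neg (by norm_num : (2:ℕ) ≠ 0)]
      norm_num
      ring
  | (m+2) =>
      have e1 : m + 2 - 1 = m + 1 := rfl
      have e2 : m + 2 - 2 = m := rfl
      have e3 : m + 1 - 1 = m := rfl
      have e4 : m + 3 - 1 = m + 2 := rfl
      have e5 : m + 2 + 1 = m + 3 := rfl
      simp only [Gban, deltaN, K1fun, e1, e2, e3, e4, e5,
        if_neg (Nat.succ_ne_zero (m+1)), if_neg (Nat.succ_ne_zero m),
        if_neg (Nat.succ_ne_zero (m+2)),
        if_neg (by omega : ¬ (m + 2 = 1))]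
      ring

lemma deltaN_I (f : ℕ → ℂ) (n : ℕ) :
    deltaN (fun k => I * aN f k) n = I * deltaN (aN f) n := by
  simp only [deltaN]; split_ifs <;> ring

end Stmt2Aux

open Stmt2Aux Function

/-- **Commutator formula `[Δ_ℕ, iA_ℕ] = (1/2)Δ_ℕ(4 − Δ_ℕ) + K₁` with `K₁` of finite
rank, and the `C¹(A_ℕ)` bound.** -/
theorem stmt2 :
    ∃ (K₁ : (ℕ → ℂ) →ₗ[ℂ] (ℕ → ℂ)) (c : ℝ),
      FiniteDimensional ℂ (LinearMap.range K₁) ∧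
      (∀ f : ℕ → ℂ, (Function.support f).Finite →
        (Function.support (K₁ f)).Finite) ∧
      0 ≤ c ∧
      (∀ f : ℕ → ℂ, (Function.support f).Finite →
        (∀ n : ℕ,
          deltaN (fun k => I * aN f k) n - I * aN (deltaN f) n
            = (1 / 2) * deltaN (fun k => 4 * f k - deltaN f k) n + K₁ f n)) ∧
      (∀ f : ℕ → ℂ, (Function.support f).Finite →
        ‖ipN (aN f) (deltaN f) - ipN (deltaN f) (aN f)‖
          ≤ c * ∑' n : ℕ, ‖f n‖ ^ 2) := by
  refine ⟨K1, 5/2, ?_, ?_, by norm_num, ?_, ?_⟩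
  · -- finite rank
    have hle : LinearMap.range K1 ≤
        Submodule.span ℂ ({Pi.single 0 1, Pi.single 1 1} : Set (ℕ → ℂ)) := by
      rintro g ⟨f, rfl⟩
      have : K1 f = (K1fun f 0) • (Pi.single 0 1 : ℕ → ℂ)
          + (K1fun f 1) • (Pi.single 1 1 : ℕ → ℂ) := by
        funext n
        match n with
        | 0 => simp [K1, K1fun]
        | 1 => simp [K1, K1fun]
        | (m+2) =>
            have h1 : (Pi.single 0 1 : ℕ → ℂ) (m+2) = 0 := by
              simp [Pi.single_apply]
            have h2 : (Pi.single 1 1 : ℕ → ℂ) (m+2) = 0 := by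
              simp [Pi.single_apply]
            simp only [K1, K1fun, LinearMap.coe_mk, AddHom.coe_mk, Pi.add_apply,
              Pi.smul_apply, h1, h2, smul_eq_mul, mul_zero, add_zero,
              if_neg (Nat.succ_ne_zero (m+1)), if_neg (by omega : ¬ (m + 2 = 1))]
      rw [this]
      exact Submodule.add_mem _
        (Submodule.smul_mem _ _ (Submodule.subset_span (by simp)))
        (Submodule.smul_mem _ _ (Submodule.subset_span (by simp)))
    have : FiniteDimensional ℂ
        (Submodule.span ℂ ({Pi.single 0 1, Pi.single 1 1} : Set (ℕ → ℂ))) :=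
      FiniteDimensional.span_of_finite ℂ (Set.toFinite _)
    exact Submodule.finiteDimensional_of_le hle
  · -- K1 preserves finite support
    intro f _
    apply finOfBound 2
    intro n hn
    simp only [K1, K1fun, LinearMap.coe_mk, AddHom.coe_mk]
    rw [if_neg (by omega), if_neg (by omega)]
  · -- commutator identity
    intro f _ n
    have h1 := comm_eq f n
    have h2 := Gban_eq f n
    have h3 := deltaN_I f n
    have : K1 f n = K1fun f n := rfl
    rw [h3, this]
    linear_combination (-I) * h1 + h2 - Gban f n * Complex.I_mul_I
  · -- the bound
    intro f hf
    obtain ⟨N, hN⟩ := finBound hf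
    have hfd : (support (deltaN f)).Finite := by
      apply finOfBound (N+1); intro n hn
      simp only [deltaN]
      rw [if_neg (by omega), hN n (by omega), hN (n-1) (by omega), hN (n+1) (by omega)]
      ring
    have hfa : (support (aN f)).Finite := by
      apply finOfBound (N+1); intro n hn
      simp only [aN]
      rw [hN (n+1) (by omega), if_neg (by omega), hN (n-1) (by omega)]
      ring
    have step1 : ipN (aN f) (deltaN f) = ipN f (aN (deltaN f)) := aN_symm hf hfd
    have step2 : ipN (deltaN f) (aN f) = ipN f (deltaN (aN f)) := delta_symm hf hfa
    have s1 : Summable (fun n => (starRingEnd ℂ) (f n) * aN (deltaN f) n) := by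
      apply summable_of_finite_support
      apply Set.Finite.subset hf
      intro n hn
      simp only [Function.mem_support] at hn ⊢
      intro h0; exact hn (by rw [h0, map_zero, zero_mul])
    have s2 : Summable (fun n => (starRingEnd ℂ) (f n) * deltaN (aN f) n) := by
      apply summable_of_finite_support
      apply Set.Finite.subset hf
      intro n hn
      simp only [Function.mem_support] at hn ⊢
      intro h0; exact hn (by rw [h0, map_zero, zero_mul])
    have key : ipN (aN f) (deltaN f) - ipN (deltaN f) (aN f)
        = ∑' n, (starRingEnd ℂ) (f n) * (I * Gban f n) := by
      rw [step1, step2, ipN, ipN, ← Summable.tsum_sub s1 s2]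
      apply tsum_congr
      intro n
      rw [← mul_sub, comm_eq]
    rw [key]
    -- set up the five comparison functions
    set fm1 : ℕ → ℂ := fun n => if n = 0 then 0 else f (n-1) with hfm1
    set fm2 : ℕ → ℂ := fun n => if n ≤ 1 then 0 else f (n-2) with hfm2
    set E : ℕ → ℝ := fun n => (7/4)*‖f n‖^2 + (1/8)*‖f (n+1)‖^2 + (1/4)*‖f (n+2)‖^2
      + (1/8)*‖fm1 n‖^2 + (1/4)*‖fm2 n‖^2 with hE
    have hGbound : ∀ n, ‖Gban f n‖
        ≤ ‖f n‖ + (1/4)*‖f (n+1)‖ + (1/2)*‖f (n+2)‖ + (1/4)*‖fm1 n‖ + (1/2)*‖fm2 n‖ := by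
      intro n
      have hhalf : ‖(1/2 : ℂ)‖ = 1/2 := by norm_num
      have hquarter : ‖(1/4 : ℂ)‖ = 1/4 := by norm_num
      match n with
      | 0 =>
          have hm1 : fm1 0 = 0 := rfl
          have hm2 : fm2 0 = 0 := rfl
          show ‖Gban f 0‖ ≤ ‖f 0‖ + (1/4)*‖f 1‖ + (1/2)*‖f 2‖ + (1/4)*‖fm1 0‖ + (1/2)*‖fm2 0‖
          rw [hm1, hm2, norm_zero]
          have hG : Gban f 0 = (1/2 : ℂ)*f 0 - (1/4)*f 1 - (1/2)*f 2 := rfl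
          rw [hG]
          have t1 := norm_sub_le ((1/2:ℂ)*f 0 - (1/4)*f 1) ((1/2:ℂ)*f 2)
          have t2 := norm_sub_le ((1/2:ℂ)*f 0) ((1/4:ℂ)*f 1)
          rw [norm_mul, hhalf] at t1
          rw [norm_mul, norm_mul, hhalf, hquarter] at t2
          have h0 : (0:ℝ) ≤ ‖f 0‖ := norm_nonneg _
          linarith
      | 1 =>
          have hm1 : fm1 1 = f 0 := rfl
          have hm2 : fm2 1 = 0 := rfl
          show ‖Gban f 1‖ ≤ ‖f 1‖ + (1/4)*‖f 2‖ + (1/2)*‖f 3‖ + (1/4)*‖fm1 1‖ + (1/2)*‖fm2 1‖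
          rw [hm1, hm2, norm_zero]
          have hG : Gban f 1 = -(1/4 : ℂ)*f 0 + f 1 - (1/2)*f 3 := rfl
          rw [hG]
          have t1 := norm_sub_le (-(1/4:ℂ)*f 0 + f 1) ((1/2:ℂ)*f 3)
          have t2 := norm_add_le (-(1/4:ℂ)*f 0) (f 1)
          rw [norm_mul, hhalf] at t1
          rw [norm_mul, norm_neg, hquarter] at t2
          have h2 : (0:ℝ) ≤ ‖f 2‖ := norm_nonneg _
          linarith
      | (m+2) =>
          have hm1 : fm1 (m+2) = f (m+1) := rfl
          have hm2 : fm2 (m+2) = f m := rfl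
          show ‖Gban f (m+2)‖ ≤ ‖f (m+2)‖ + (1/4)*‖f (m+2+1)‖ + (1/2)*‖f (m+2+2)‖
              + (1/4)*‖fm1 (m+2)‖ + (1/2)*‖fm2 (m+2)‖
          rw [hm1, hm2]
          have hG : Gban f (m+2) = f (m+2) - (1/2 : ℂ)*f m - (1/2)*f (m+2+2) := rfl
          rw [hG]
          have t1 := norm_sub_le (f (m+2) - (1/2:ℂ)*f m) ((1/2:ℂ)*f (m+2+2))
          have t2 := norm_sub_le (f (m+2)) ((1/2:ℂ)*f m)
          rw [norm_mul, hhalf] at t1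
          rw [norm_mul, hhalf] at t2
          have h1 : (0:ℝ) ≤ ‖f (m+2+1)‖ := norm_nonneg _
          have h2 : (0:ℝ) ≤ ‖f (m+1)‖ := norm_nonneg _
          linarith
    have pointwise : ∀ n, ‖(starRingEnd ℂ) (f n) * (I * Gban f n)‖ ≤ E n := by
      intro n
      have hnorm : ‖(starRingEnd ℂ) (f n) * (I * Gban f n)‖ = ‖f n‖ * ‖Gban f n‖ := by
        simp [norm_mul]
      rw [hnorm, hE]
      have hG := hGbound n
      have ha : (0:ℝ) ≤ ‖f n‖ := norm_nonneg _
      have h1 : (0:ℝ) ≤ ‖f (n+1)‖ := norm_nonneg _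
      have h2 : (0:ℝ) ≤ ‖f (n+2)‖ := norm_nonneg _
      have h3 : (0:ℝ) ≤ ‖fm1 n‖ := norm_nonneg _
      have h4 : (0:ℝ) ≤ ‖fm2 n‖ := norm_nonneg _
      have step : ‖f n‖ * ‖Gban f n‖ ≤ ‖f n‖ * (‖f n‖ + (1/4)*‖f (n+1)‖
          + (1/2)*‖f (n+2)‖ + (1/4)*‖fm1 n‖ + (1/2)*‖fm2 n‖) :=
        mul_le_mul_of_nonneg_left hG ha
      refine le_trans step ?_
      nlinarith [sq_nonneg (‖f n‖ - ‖f (n+1)‖), sq_nonneg (‖f n‖ - ‖f (n+2)‖),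
        sq_nonneg (‖f n‖ - ‖fm1 n‖), sq_nonneg (‖f n‖ - ‖fm2 n‖)]
    -- summabilities
    have sumsq : Summable (fun n => ‖f n‖^2) := by
      apply summable_of_finite_support
      apply finOfBound N
      intro n hn; rw [hN n hn]; simp
    have sum1 : Summable (fun n => ‖f (n+1)‖^2) := by
      apply summable_of_finite_support; apply finOfBound N
      intro n hn; rw [hN (n+1) (by omega)]; simp
    have sum2 : Summable (fun n => ‖f (n+2)‖^2) := by
      apply summable_of_finite_support; apply finOfBound N
      intro n hn; rw [hN (n+2) (by omega)]; simp
    have sum3 : Summable (fun n => ‖fm1 n‖^2) := by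
      apply summable_of_finite_support; apply finOfBound (N+1)
      intro n hn; simp only [hfm1]; rw [if_neg (by omega), hN (n-1) (by omega)]; simp
    have sum4 : Summable (fun n => ‖fm2 n‖^2) := by
      apply summable_of_finite_support; apply finOfBound (N+2)
      intro n hn; simp only [hfm2]; rw [if_neg (by omega), hN (n-2) (by omega)]; simp
    have sumE : Summable E := by
      apply Summable.add
      apply Summable.add
      apply Summable.add
      apply Summable.add
      · exact (sumsq.mul_left _)
      · exact (sum1.mul_left _)
      · exact (sum2.mul_left _)
      · exact (sum3.mul_left _)
      · exact (sum4.mul_left _)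
    have sumLHS : Summable (fun n => ‖(starRingEnd ℂ) (f n) * (I * Gban f n)‖) := by
      apply summable_of_finite_support
      apply Set.Finite.subset hf
      intro n hn
      simp only [Function.mem_support] at hn ⊢
      intro h0; apply hn; rw [h0]; simp
    -- shifted sum bounds
    set S0 : ℝ := ∑' n, ‖f n‖^2 with hS0
    have hS0nn : 0 ≤ S0 := tsum_nonneg (fun n => sq_nonneg _)
    have shift1 : ∑' n, ‖f (n+1)‖^2 ≤ S0 := by
      have := Summable.tsum_eq_zero_add sumsq
      rw [hS0, this]
      have : (0:ℝ) ≤ ‖f 0‖^2 := sq_nonneg _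
      linarith
    have shift2 : ∑' n, ‖f (n+2)‖^2 ≤ S0 := by
      have h1 := Summable.tsum_eq_zero_add sumsq
      have h2 := Summable.tsum_eq_zero_add sum1
      have e : ∀ n:ℕ, ‖f (n+1+1)‖^2 = ‖f (n+2)‖^2 := fun n => rfl
      rw [hS0, h1]
      rw [tsum_congr e] at h2
      have h3 : (0:ℝ) ≤ ‖f 0‖^2 := sq_nonneg _
      have h4 : (0:ℝ) ≤ ‖f 1‖^2 := sq_nonneg _
      rw [h2]
      linarith
    have shiftm1 : ∑' n, ‖fm1 n‖^2 ≤ S0 := by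
      rw [Summable.tsum_eq_zero_add sum3]
      have e0 : ‖fm1 0‖^2 = 0 := by simp [hfm1]
      have e : ∀ n:ℕ, ‖fm1 (n+1)‖^2 = ‖f n‖^2 := by intro n; simp [hfm1]
      rw [e0, tsum_congr e, zero_add]
    have shiftm2 : ∑' n, ‖fm2 n‖^2 ≤ S0 := by
      have sum4' : Summable (fun n => ‖fm2 (n+1)‖^2) := by
        apply summable_of_finite_support; apply finOfBound (N+2)
        intro n hn; simp only [hfm2]; rw [if_neg (by omega), hN (n+1-2) (by omega)]; simp
      rw [Summable.tsum_eq_zero_add sum4, Summable.tsum_eq_zero_add sum4']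
      have e0 : ‖fm2 0‖^2 = 0 := by simp [hfm2]
      have e1 : ‖fm2 1‖^2 = 0 := by simp [hfm2]
      have e : ∀ n:ℕ, ‖fm2 (n+1+1)‖^2 = ‖f n‖^2 := by
        intro n; simp only [hfm2]; rw [if_neg (by omega)]; rfl
      rw [e0, e1, tsum_congr e, zero_add, zero_add]
    -- put everything together
    calc ‖∑' n, (starRingEnd ℂ) (f n) * (I * Gban f n)‖
        = ‖∑' n, (starRingEnd ℂ) (f n) * (I * Gban f n)‖ := rfl
      _ ≤ ∑' n, ‖(starRingEnd ℂ) (f n) * (I * Gban f n)‖ := norm_tsum_le_tsum_norm sumLHS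
      _ ≤ ∑' n, E n := Summable.tsum_le_tsum pointwise sumLHS sumE
      _ = (7/4)*S0 + ((1/8)*∑' n, ‖f (n+1)‖^2) + ((1/4)*∑' n, ‖f (n+2)‖^2)
          + ((1/8)*∑' n, ‖fm1 n‖^2) + ((1/4)*∑' n, ‖fm2 n‖^2) := by
          rw [hE, hS0]
          rw [Summable.tsum_add (((sumsq.mul_left _).add (sum1.mul_left _)).add (sum2.mul_left _)
            |>.add (sum3.mul_left _)) (sum4.mul_left _)]
          rw [Summable.tsum_add (((sumsq.mul_left _).add (sum1.mul_left _)).add (sum2.mul_left _))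
            (sum3.mul_left _)]
          rw [Summable.tsum_add ((sumsq.mul_left _).add (sum1.mul_left _)) (sum2.mul_left _)]
          rw [Summable.tsum_add (sumsq.mul_left _) (sum1.mul_left _)]
          rw [tsum_mul_left, tsum_mul_left, tsum_mul_left, tsum_mul_left, tsum_mul_left]
      _ ≤ (7/4)*S0 + (1/8)*S0 + (1/4)*S0 + (1/8)*S0 + (1/4)*S0 := by
          have m1 : (1/8:ℝ)*∑' n, ‖f (n+1)‖^2 ≤ (1/8)*S0 := by
            apply mul_le_mul_of_nonneg_left shift1; norm_num
          have m2 : (1/4:ℝ)*∑' n, ‖f (n+2)‖^2 ≤ (1/4)*S0 := by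
            apply mul_le_mul_of_nonneg_left shift2; norm_num
          have m3 : (1/8:ℝ)*∑' n, ‖fm1 n‖^2 ≤ (1/8)*S0 := by
            apply mul_le_mul_of_nonneg_left shiftm1; norm_num
          have m4 : (1/4:ℝ)*∑' n, ‖fm2 n‖^2 ≤ (1/4)*S0 := by
            apply mul_le_mul_of_nonneg_left shiftm2; norm_num
          linarith
      _ = (5/2) * S0 := by ring
end
end

section
/- Let V be a countable set, m, m' : V → (0,∞) two weights, and E' : V×V → [0,∞) symmetric, vanishing on the diagonal, such that every vertex has finitely many E'-neighbors. Then: (1) T_{m→m'} is a unitary operator (a surjective linear isometry) from ℓ²(V, m) onto ℓ²(V, m'); (2) setting Ẽ(x,y) := E'(x,y)·√(m(x)m(y)/(m'(x)m'(y))) and W(x) := (1/m(x))·∑_{y∈V} Ẽ(x,y)·(1 − √(m(x)m'(y)/(m(y)m'(x)))), one has, for every finitely supported f : V → ℂ, Δ_{G'}(T_{m→m'} f) = T_{m→m'}( Δ_{G̃} f − W·f ), where G' = (E', V, m') and G̃ = (Ẽ, V, m). -/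
noncomputable section

open Complex

/-- The gauge transform `T_{m→m'} f = (x ↦ √(m(x)/m'(x))·f(x))`. -/
def Tw {V : Type*} (m m' : V → ℝ) (f : V → ℂ) : V → ℂ :=
  fun x => (Real.sqrt (m x / m' x) : ℂ) * f x

/-- The Laplacian of the weighted graph `(E, V, m)`:
`(Δ_G f)(x) = (1/m(x))·∑_y E(x,y)·(f(x) − f(y))`. -/
def lap {V : Type*} (E : V → V → ℝ) (m : V → ℝ) (f : V → ℂ) : V → ℂ :=
  fun x => (1 / (m x : ℂ)) * ∑' y : V, ((E x y : ℝ) : ℂ) * (f x - f y)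

/-- Membership in `ℓ²(V, m)`. -/
def MemL2 {V : Type*} (m : V → ℝ) (f : V → ℂ) : Prop :=
  Summable fun x => m x * ‖f x‖ ^ 2

/-- The inner product of `ℓ²(V, m)`. -/
def wip {V : Type*} (m : V → ℝ) (f g : V → ℂ) : ℂ :=
  ∑' x : V, (m x : ℂ) * ((starRingEnd ℂ) (f x) * g x)

lemma aux_ms {V : Type*} (m m' : V → ℝ) (hm : ∀ x, 0 < m x) (hm' : ∀ x, 0 < m' x)
    (x : V) : m' x * (m x / m' x) = m x := by
  rw [mul_comm, div_mul_cancel₀ _ (hm' x).ne']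

lemma aux_weight {V : Type*} (m m' : V → ℝ) (hm : ∀ x, 0 < m x) (hm' : ∀ x, 0 < m' x)
    (f : V → ℂ) (x : V) : m' x * ‖Tw m m' f x‖ ^ 2 = m x * ‖f x‖ ^ 2 := by
  have h0 : (0:ℝ) ≤ m x / m' x := div_nonneg (hm x).le (hm' x).le
  simp only [Tw, norm_mul, Complex.norm_real, Real.norm_eq_abs,
    _root_.abs_of_nonneg (Real.sqrt_nonneg _), mul_pow, Real.sq_sqrt h0]
  rw [← mul_assoc, aux_ms m m' hm hm' x]

lemma aux_inv {V : Type*} (m m' : V → ℝ) (hm : ∀ x, 0 < m x) (hm' : ∀ x, 0 < m' x)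
    (f : V → ℂ) : Tw m m' (Tw m' m f) = f := by
  funext x
  simp only [Tw, ← mul_assoc, ← Complex.ofReal_mul,
    ← Real.sqrt_mul (div_nonneg (hm x).le (hm' x).le)]
  have : m x / m' x * (m' x / m x) = 1 := by
    rw [div_mul_div_comm, mul_comm]
    exact div_self (mul_pos (hm' x) (hm x)).ne'
  rw [this, Real.sqrt_one]
  simp

/-- **The gauge transform is unitary and intertwines the Laplacians
(Proposition on the unitary transformation `T_{m→m'}`).** -/
theorem stmt3 {V : Type*} [Countable V] (m m' : V → ℝ)
    (hm : ∀ x, 0 < m x) (hm' : ∀ x, 0 < m' x)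
    (E' : V → V → ℝ) (hsym : ∀ x y, E' x y = E' y x)
    (hpos : ∀ x y, 0 ≤ E' x y) (hdiag : ∀ x, E' x x = 0)
    (hlocfin : ∀ x, {y | E' x y ≠ 0}.Finite) :
    -- (1) `T_{m→m'}` is a unitary operator from `ℓ²(V,m)` onto `ℓ²(V,m')`:
    (∀ a : ℂ, ∀ f g : V → ℂ,
      Tw m m' (a • f + g) = a • Tw m m' f + Tw m m' g) ∧
    (∀ f : V → ℂ, MemL2 m f ↔ MemL2 m' (Tw m m' f)) ∧
    (Set.BijOn (Tw m m') {f | MemL2 m f} {f | MemL2 m' f}) ∧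
    (∀ f g : V → ℂ, MemL2 m f → MemL2 m g →
      wip m' (Tw m m' f) (Tw m m' g) = wip m f g) ∧
    -- (2) the intertwining formula `Δ_{G'} ∘ T_{m→m'} = T_{m→m'} ∘ (Δ_{G̃} − W·)`
    (∀ f : V → ℂ, (Function.support f).Finite →
      lap E' m' (Tw m m' f)
        = Tw m m' (fun x =>
            lap (fun x y => E' x y * Real.sqrt (m x * m y / (m' x * m' y))) m f x
            - (((1 / m x) * ∑' y : V,
                (E' x y * Real.sqrt (m x * m y / (m' x * m' y)))
                  * (1 - Real.sqrt (m x * m' y / (m y * m' x))) : ℝ) : ℂ) * f x)) := by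
  have hiff : ∀ f : V → ℂ, MemL2 m f ↔ MemL2 m' (Tw m m' f) := by
    intro f
    unfold MemL2
    constructor <;> intro h <;>
      · refine h.congr fun x => ?_
        rw [aux_weight m m' hm hm' f x]
  refine ⟨?_, hiff, ⟨?_, ?_, ?_⟩, ?_, ?_⟩
  · intro a f g; funext x; simp [Tw]; ring
  · intro f hf; exact (hiff f).mp hf
  · intro f _ g _ hfg
    funext x
    have := congrFun hfg x
    simp only [Tw, mul_eq_mul_left_iff] at this
    rcases this with h | h
    · exact h
    · exact absurd h (by
        simp only [Complex.ofReal_eq_zero]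
        exact (Real.sqrt_pos.mpr (div_pos (hm x) (hm' x))).ne')
  · intro g hg
    refine ⟨Tw m' m g, ?_, aux_inv m m' hm hm' g⟩
    have : MemL2 m (Tw m' m g) ↔ MemL2 m' (Tw m m' (Tw m' m g)) := hiff _
    rw [aux_inv m m' hm hm' g] at this
    exact this.mpr hg
  · intro f g _ _
    unfold wip
    refine tsum_congr fun x => ?_
    simp only [Tw, map_mul, Complex.conj_ofReal]
    have h0 : (0:ℝ) ≤ m x / m' x := div_nonneg (hm x).le (hm' x).le
    have key : ((m' x : ℂ)) * ((Real.sqrt (m x / m' x) : ℂ) * (Real.sqrt (m x / m' x) : ℂ))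
        = (m x : ℂ) := by
      rw [← Complex.ofReal_mul, ← Complex.ofReal_mul, Real.mul_self_sqrt h0,
        aux_ms m m' hm hm' x]
    linear_combination ((starRingEnd ℂ) (f x) * g x) * key
  · -- part (2)
    intro f hf
    funext x
    simp only [Tw, lap]
    -- summability helper
    have hsee : ∀ h : V → ℂ, (∀ y, E' x y = 0 → h y = 0) → Summable h := by
      intro h hh
      exact summable_of_ne_finset_zero (s := (hlocfin x).toFinset)
        (fun y hy => hh y (by simpa using hy))
    rw [Complex.ofReal_mul, Complex.ofReal_tsum]
    rw [← tsum_mul_left (a := (1:ℂ)/(m' x))]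
    rw [← tsum_mul_left (a := (1:ℂ)/(m x))]
    rw [← tsum_mul_left (a := ((1/(m x) : ℝ) : ℂ)), ← tsum_mul_right]
    have hsum2 : Summable fun y => (1:ℂ)/(m x) *
        (((E' x y * Real.sqrt (m x * m y / (m' x * m' y)) : ℝ) : ℂ) * (f x - f y)) :=
      hsee _ fun y hy => by simp [hy]
    have hsum3 : Summable fun y => ((1/m x : ℝ) : ℂ) *
        ((E' x y * Real.sqrt (m x * m y / (m' x * m' y)) *
          (1 - Real.sqrt (m x * m' y / (m y * m' x))) : ℝ) : ℂ) * f x :=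
      hsee _ fun y hy => by simp [hy]
    rw [← Summable.tsum_sub hsum2 hsum3, ← tsum_mul_left]
    refine tsum_congr fun y => ?_
    have ha := Real.sqrt_pos.mpr (hm x)
    have hb := Real.sqrt_pos.mpr (hm y)
    have ha' := Real.sqrt_pos.mpr (hm' x)
    have hb' := Real.sqrt_pos.mpr (hm' y)
    have r1 : Real.sqrt (m x / m' x) = Real.sqrt (m x) / Real.sqrt (m' x) :=
      Real.sqrt_div (hm x).le _
    have r2 : Real.sqrt (m y / m' y) = Real.sqrt (m y) / Real.sqrt (m' y) :=
      Real.sqrt_div (hm y).le _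
    have r3 : Real.sqrt (m x * m y / (m' x * m' y))
        = Real.sqrt (m x) * Real.sqrt (m y) / (Real.sqrt (m' x) * Real.sqrt (m' y)) := by
      rw [Real.sqrt_div (mul_nonneg (hm x).le (hm y).le), Real.sqrt_mul (hm x).le, Real.sqrt_mul (hm' x).le]
    have r4 : Real.sqrt (m x * m' y / (m y * m' x))
        = Real.sqrt (m x) * Real.sqrt (m' y) / (Real.sqrt (m y) * Real.sqrt (m' x)) := by
      rw [Real.sqrt_div (mul_nonneg (hm x).le (hm' y).le), Real.sqrt_mul (hm x).le, Real.sqrt_mul (hm y).le]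
    have e1 : m x = Real.sqrt (m x) ^ 2 := (Real.sq_sqrt (hm x).le).symm
    have e2 : m' x = Real.sqrt (m' x) ^ 2 := (Real.sq_sqrt (hm' x).le).symm
    rw [r1, r2, r3, r4, e1, e2]
    push_cast
    simp only [Real.sqrt_sq ha.le, Real.sqrt_sq ha'.le]
    have hca : ((Real.sqrt (m x) : ℂ)) ≠ 0 := Complex.ofReal_ne_zero.mpr ha.ne'
    have hcb : ((Real.sqrt (m y) : ℂ)) ≠ 0 := Complex.ofReal_ne_zero.mpr hb.ne'
    have hca' : ((Real.sqrt (m' x) : ℂ)) ≠ 0 := Complex.ofReal_ne_zero.mpr ha'.ne'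
    have hcb' : ((Real.sqrt (m' y) : ℂ)) ≠ 0 := Complex.ofReal_ne_zero.mpr hb'.ne'
    field_simp
    ring
end
end
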